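/- Let (v,q) ∈ V × Q with (v,q) ≠ (0,0) and set S := S(v,q) := sup over (0,0) ≠ (w,r) ∈ V × Q of |A((v,q);(w,r))| / (‖w‖_V² + ‖r‖_Q²)^{1/2}. Then the pressure component satisfies ‖q‖_Q² ≤ 2C_b²S² + 2C_b²M²α⁻¹ S (‖v‖_V² + ‖q‖_Q²)^{1/2}. -/

import Mathlib

set_option maxHeartbeats 1000000 in
/-- Pressure bound in the inf-sup argument for the Oseen-type saddle-point form:
`‖q‖² ≤ 2C_b²S² + 2C_b²M²α⁻¹ S (‖v‖² + ‖q‖²)^(1/2)` where `S = S(v,q)` is the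
inf-sup supremum in the second argument of `A`. -/
theorem oseen_saddle_pressure_bound
    {V Q : Type*} [NormedAddCommGroup V] [InnerProductSpace ℂ V] [CompleteSpace V]
    [NormedAddCommGroup Q] [InnerProductSpace ℂ Q] [CompleteSpace Q]
    (a : V →ₗ[ℂ] V →ₛₗ[starRingEnd ℂ] ℂ)
    (d : Q →ₗ[ℂ] V →ₛₗ[starRingEnd ℂ] ℂ)
    (α M M_d C_b : ℝ) (hα : 0 < α) (hM : 0 < M) (hMd : 0 < M_d) (hCb : 0 < C_b)
    (hcoer : ∀ v : V, α * ‖v‖ ^ 2 ≤ (a v v).re)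
    (hcont : ∀ u v : V, ‖a u v‖ ≤ M * ‖u‖ * ‖v‖)
    (hdbdd : ∀ (q : Q) (v : V), ‖d q v‖ ≤ M_d * ‖q‖ * ‖v‖)
    (hinv : ∀ q : Q, ∃ vt : V, d q vt = (‖q‖ : ℂ) ^ 2 ∧ ‖vt‖ ≤ C_b * ‖q‖)
    (A : V × Q → V × Q → ℂ)
    (hA : ∀ (u : V) (p : Q) (v : V) (q : Q),
      A (u, p) (v, q) = a u v + d p v - starRingEnd ℂ (d q u))
    (v : V) (q : Q) (hvq : (v, q) ≠ (0, 0))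
    (S : ℝ)
    (hS : S = sSup {s : ℝ | ∃ (w : V) (r : Q), (w, r) ≠ (0, 0) ∧
      s = ‖A (v, q) (w, r)‖ / Real.sqrt (‖w‖ ^ 2 + ‖r‖ ^ 2)}) :
    ‖q‖ ^ 2 ≤ 2 * C_b ^ 2 * S ^ 2 +
      2 * C_b ^ 2 * M ^ 2 * α⁻¹ * S * Real.sqrt (‖v‖ ^ 2 + ‖q‖ ^ 2) := by
  -- positivity of the denominator for nonzero pairs
  have hpos : ∀ (w : V) (r : Q), (w, r) ≠ (0, 0) → 0 < Real.sqrt (‖w‖ ^ 2 + ‖r‖ ^ 2) := by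
    intro w r hwr
    apply Real.sqrt_pos.2
    have : w ≠ 0 ∨ r ≠ 0 := by
      by_contra h
      push_neg at h
      exact hwr (by simp [h.1, h.2])
    rcases this with h | h
    · have := norm_pos_iff.2 h
      nlinarith [sq_nonneg ‖r‖]
    · have := norm_pos_iff.2 h
      nlinarith [sq_nonneg ‖w‖]
  have hTpos : 0 < Real.sqrt (‖v‖ ^ 2 + ‖q‖ ^ 2) := hpos v q hvq
  set T := Real.sqrt (‖v‖ ^ 2 + ‖q‖ ^ 2) with hTdef
  -- the set is bounded above
  have hbdd : BddAbove {s : ℝ | ∃ (w : V) (r : Q), (w, r) ≠ (0, 0) ∧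
      s = ‖A (v, q) (w, r)‖ / Real.sqrt (‖w‖ ^ 2 + ‖r‖ ^ 2)} := by
    refine ⟨M * ‖v‖ + M_d * ‖q‖ + M_d * ‖v‖, ?_⟩
    rintro s ⟨w, r, hwr, rfl⟩
    have hsq := hpos w r hwr
    rw [div_le_iff₀ hsq]
    have hw : ‖w‖ ≤ Real.sqrt (‖w‖ ^ 2 + ‖r‖ ^ 2) := by
      have h := Real.sqrt_le_sqrt (show ‖w‖ ^ 2 ≤ ‖w‖ ^ 2 + ‖r‖ ^ 2 by nlinarith [sq_nonneg ‖r‖])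
      rwa [Real.sqrt_sq (norm_nonneg w)] at h
    have hr : ‖r‖ ≤ Real.sqrt (‖w‖ ^ 2 + ‖r‖ ^ 2) := by
      have h := Real.sqrt_le_sqrt (show ‖r‖ ^ 2 ≤ ‖w‖ ^ 2 + ‖r‖ ^ 2 by nlinarith [sq_nonneg ‖w‖])
      rwa [Real.sqrt_sq (norm_nonneg r)] at h
    rw [hA]
    calc ‖a v w + d q w - starRingEnd ℂ (d r v)‖
        ≤ ‖a v w + d q w‖ + ‖starRingEnd ℂ (d r v)‖ := norm_sub_le _ _
      _ ≤ ‖a v w‖ + ‖d q w‖ + ‖d r v‖ := by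
          rw [RCLike.norm_conj]
          exact add_le_add (norm_add_le (a v w) (d q w)) le_rfl
      _ ≤ M * ‖v‖ * ‖w‖ + M_d * ‖q‖ * ‖w‖ + M_d * ‖r‖ * ‖v‖ := by
          gcongr
          · exact hcont v w
          · exact hdbdd q w
          · exact hdbdd r v
      _ ≤ (M * ‖v‖ + M_d * ‖q‖ + M_d * ‖v‖) * Real.sqrt (‖w‖ ^ 2 + ‖r‖ ^ 2) := by
          nlinarith [norm_nonneg v, norm_nonneg q, norm_nonneg w, norm_nonneg r,
            mul_le_mul_of_nonneg_left hw (mul_nonneg (le_of_lt hM) (norm_nonneg v)),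
            mul_le_mul_of_nonneg_left hw (mul_nonneg (le_of_lt hMd) (norm_nonneg q)),
            mul_le_mul_of_nonneg_left hr (mul_nonneg (le_of_lt hMd) (norm_nonneg v))]
  -- key: every test pair is bounded by S
  have key : ∀ (w : V) (r : Q), (w, r) ≠ (0, 0) →
      ‖A (v, q) (w, r)‖ ≤ S * Real.sqrt (‖w‖ ^ 2 + ‖r‖ ^ 2) := by
    intro w r hwr
    have hmem : ‖A (v, q) (w, r)‖ / Real.sqrt (‖w‖ ^ 2 + ‖r‖ ^ 2) ∈
        {s : ℝ | ∃ (w : V) (r : Q), (w, r) ≠ (0, 0) ∧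
          s = ‖A (v, q) (w, r)‖ / Real.sqrt (‖w‖ ^ 2 + ‖r‖ ^ 2)} := ⟨w, r, hwr, rfl⟩
    have := le_csSup hbdd hmem
    rw [← hS] at this
    rw [div_le_iff₀ (hpos w r hwr)] at this
    linarith
  -- S is nonnegative
  have hS0 : 0 ≤ S := by
    have hmem : ‖A (v, q) (v, q)‖ / T ∈
        {s : ℝ | ∃ (w : V) (r : Q), (w, r) ≠ (0, 0) ∧
          s = ‖A (v, q) (w, r)‖ / Real.sqrt (‖w‖ ^ 2 + ‖r‖ ^ 2)} := ⟨v, q, hvq, rfl⟩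
    have h1 := le_csSup hbdd hmem
    rw [← hS] at h1
    exact le_trans (div_nonneg (norm_nonneg _) (le_of_lt hTpos)) h1
  -- velocity bound from coercivity
  have hv2 : α * ‖v‖ ^ 2 ≤ S * T := by
    have hre : (A (v, q) (v, q)).re = (a v v).re := by
      rw [hA]
      simp [Complex.sub_re, Complex.add_re, Complex.conj_re]
    have h1 : (A (v, q) (v, q)).re ≤ ‖A (v, q) (v, q)‖ := Complex.re_le_norm _
    have h2 := key v q hvq
    have h3 := hcoer v
    linarith [hre ▸ h3, h1.trans h2]
  have hv2' : ‖v‖ ^ 2 ≤ α⁻¹ * (S * T) := by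
    rw [inv_mul_eq_div, le_div_iff₀ hα]
    linarith
  -- pressure bound via the right inverse
  have hqb : ‖q‖ ≤ C_b * (S + M * ‖v‖) := by
    by_cases hq0 : q = 0
    · simp only [hq0, norm_zero]
      exact mul_nonneg hCb.le (add_nonneg hS0 (mul_nonneg hM.le (norm_nonneg v)))
    · obtain ⟨vt, hdv, hvt⟩ := hinv q
      have hq0' : (0:ℝ) < ‖q‖ := norm_pos_iff.2 hq0
      have hvt0 : vt ≠ 0 := by
        intro h
        rw [h, map_zero] at hdv
        have : (‖q‖ : ℂ) = 0 := by
          have := pow_eq_zero_iff (n := 2) (by norm_num) |>.1 hdv.symm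
          exact this
        have : ‖q‖ = 0 := by exact_mod_cast this
        exact hq0 (norm_eq_zero.1 this)
      have hk := key vt 0 (by simp [hvt0])
      have hsq : Real.sqrt (‖vt‖ ^ 2 + ‖(0:Q)‖ ^ 2) = ‖vt‖ := by
        simp [Real.sqrt_sq (norm_nonneg vt)]
      rw [hsq] at hk
      have hAval : A (v, q) (vt, 0) = a v vt + (‖q‖ : ℂ) ^ 2 := by
        rw [hA, hdv]
        simp
      have hnq : ‖q‖ ^ 2 ≤ ‖A (v, q) (vt, 0)‖ + ‖a v vt‖ := by
        have : (‖q‖ : ℂ) ^ 2 = A (v, q) (vt, 0) - a v vt := by rw [hAval]; ring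
        have h4 : ‖((‖q‖ : ℂ)) ^ 2‖ ≤ ‖A (v, q) (vt, 0)‖ + ‖a v vt‖ := by
          rw [this]; exact norm_sub_le _ _
        rwa [norm_pow, Complex.norm_real, Real.norm_eq_abs, abs_norm] at h4
      have h5 := hcont v vt
      have h6 : ‖q‖ ^ 2 ≤ (S + M * ‖v‖) * ‖vt‖ := by nlinarith
      have h7 : ‖q‖ ^ 2 ≤ (S + M * ‖v‖) * (C_b * ‖q‖) := by
        have hSM : 0 ≤ S + M * ‖v‖ := by nlinarith [norm_nonneg v]
        nlinarith
      nlinarith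
  -- conclude
  have hqq : ‖q‖ ^ 2 ≤ C_b ^ 2 * (S + M * ‖v‖) ^ 2 := by
    have h := mul_le_mul hqb hqb (norm_nonneg q)
      (mul_nonneg hCb.le (add_nonneg hS0 (mul_nonneg hM.le (norm_nonneg v))))
    nlinarith
  have e1 : ‖q‖ ^ 2 ≤ 2 * C_b ^ 2 * S ^ 2 + 2 * C_b ^ 2 * M ^ 2 * ‖v‖ ^ 2 := by
    nlinarith [mul_nonneg (sq_nonneg C_b) (sq_nonneg (S - M * ‖v‖)), hqq]
  have e2 := mul_le_mul_of_nonneg_left hv2' (by positivity : (0:ℝ) ≤ 2 * C_b ^ 2 * M ^ 2)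
  nlinarith [e1, e2]
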